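/- Let E ⊆ ℝ be nonempty and compact, f, g : ℝ × E → ℝ continuous, and φ : ℝ × ℝ → ℝ twice continuously differentiable. Fix (x,t) ∈ ℝ × ℝ. Then for all sequences y_k → x, s_k → t, Δx_k → 0⁺, Δt_k → 0⁺, the quantity (1/Δt_k) · [ φ(y_k, s_k) − φ(y_k, s_k + Δt_k) − Δt_k · min_{A∈E} ( f⁺(y_k,A)·(φ(y_k+Δx_k, s_k+Δt_k) − φ(y_k, s_k+Δt_k))/Δx_k + f⁻(y_k,A)·(φ(y_k, s_k+Δt_k) − φ(y_k−Δx_k, s_k+Δt_k))/Δx_k + g(y_k,A) ) ] converges to −∂t φ(x,t) − min_{a∈E} ( f(x,a)·∂x φ(x,t) + g(x,a) ) as k → ∞. (Consistency of the upwind scheme with the HJB equation.) -/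

import Mathlib

open Filter Set

lemma abs_posPart_le' (a : ℝ) : |max a 0| ≤ |a| := by
  rcases le_total a 0 with h | h
  · simp [max_eq_right h]
  · simp [max_eq_left h]

lemma abs_negPart_le' (a : ℝ) : |min a 0| ≤ |a| := by
  rcases le_total a 0 with h | h
  · simp [min_eq_left h]
  · simp [min_eq_right h]

lemma csInf_image_le_csInf_image_add {E : Set ℝ} (hE : E.Nonempty) {h1 h2 : ℝ → ℝ} {ε : ℝ}
    (hb1 : BddBelow (h1 '' E))
    (hle : ∀ a ∈ E, h1 a ≤ h2 a + ε) :
    sInf (h1 '' E) ≤ sInf (h2 '' E) + ε := by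
  have : sInf (h1 '' E) - ε ≤ sInf (h2 '' E) := by
    apply le_csInf (hE.image _)
    rintro b ⟨a, ha, rfl⟩
    have h := csInf_le hb1 (Set.mem_image_of_mem h1 ha)
    have := hle a ha
    linarith
  linarith

lemma abs_csInf_image_sub_le {E : Set ℝ} (hE : E.Nonempty) {h1 h2 : ℝ → ℝ} {ε : ℝ}
    (hb1 : BddBelow (h1 '' E)) (hb2 : BddBelow (h2 '' E))
    (hle : ∀ a ∈ E, |h1 a - h2 a| ≤ ε) :
    |sInf (h1 '' E) - sInf (h2 '' E)| ≤ ε := by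
  rw [abs_sub_le_iff]
  constructor
  · have := csInf_image_le_csInf_image_add (h2 := h2) (ε := ε) hE hb1 (fun a ha => by have := (abs_sub_le_iff.mp (hle a ha)).1; linarith)
    linarith
  · have := csInf_image_le_csInf_image_add (h2 := h1) (ε := ε) hE hb2 (fun a ha => by have := (abs_sub_le_iff.mp (hle a ha)).2; linarith)
    linarith

/-- consistency of the upwind scheme with the HJB equation. -/
theorem stmt_4 (E : Set ℝ) (hE : E.Nonempty) (hEc : IsCompact E)
    (f g : ℝ → ℝ → ℝ)
    (hf : ContinuousOn (fun q : ℝ × ℝ => f q.1 q.2) (Set.univ ×ˢ E))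
    (hg : ContinuousOn (fun q : ℝ × ℝ => g q.1 q.2) (Set.univ ×ˢ E))
    (φ : ℝ → ℝ → ℝ) (hφ : ContDiff ℝ 2 (fun q : ℝ × ℝ => φ q.1 q.2))
    (x t : ℝ)
    (y s Δx Δt : ℕ → ℝ)
    (hy : Filter.Tendsto y Filter.atTop (nhds x))
    (hs : Filter.Tendsto s Filter.atTop (nhds t))
    (hΔxpos : ∀ k, 0 < Δx k) (hΔtpos : ∀ k, 0 < Δt k)
    (hΔx : Filter.Tendsto Δx Filter.atTop (nhds 0))
    (hΔt : Filter.Tendsto Δt Filter.atTop (nhds 0)) :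
    Filter.Tendsto
      (fun k => (1 / Δt k) *
        (φ (y k) (s k) - φ (y k) (s k + Δt k)
          - Δt k * sInf ((fun A =>
              max (f (y k) A) 0 *
                ((φ (y k + Δx k) (s k + Δt k) - φ (y k) (s k + Δt k)) / Δx k)
              + min (f (y k) A) 0 *
                ((φ (y k) (s k + Δt k) - φ (y k - Δx k) (s k + Δt k)) / Δx k)
              + g (y k) A) '' E)))
      Filter.atTop
      (nhds (-(deriv (fun s' => φ x s') t)
        - sInf ((fun a => f x a * deriv (fun y' => φ y' t) x + g x a) '' E))) := by
  set Φ : ℝ × ℝ → ℝ := fun q => φ q.1 q.2 with hΦdef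
  have hφd : Differentiable ℝ Φ := hφ.differentiable two_ne_zero
  have hfd_cont : Continuous (fderiv ℝ Φ) := hφ.continuous_fderiv two_ne_zero
  set Fx : ℝ × ℝ → ℝ := fun p => fderiv ℝ Φ p (1, 0) with hFxdef
  set Ft : ℝ × ℝ → ℝ := fun p => fderiv ℝ Φ p (0, 1) with hFtdef
  have hFx_cont : Continuous Fx := hfd_cont.clm_apply continuous_const
  have hFt_cont : Continuous Ft := hfd_cont.clm_apply continuous_const
  have hDx : ∀ a b : ℝ, HasDerivAt (fun a' => φ a' b) (Fx (a, b)) a := by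
    intro a b
    have h1 : HasDerivAt (fun a' : ℝ => ((a', b) : ℝ × ℝ)) ((1 : ℝ), (0 : ℝ)) a :=
      (hasDerivAt_id a).prodMk (hasDerivAt_const a b)
    exact ((hφd (a, b)).hasFDerivAt).comp_hasDerivAt a h1
  have hDt : ∀ a b : ℝ, HasDerivAt (fun b' => φ a b') (Ft (a, b)) b := by
    intro a b
    have h1 : HasDerivAt (fun b' : ℝ => ((a, b') : ℝ × ℝ)) ((0 : ℝ), (1 : ℝ)) b :=
      (hasDerivAt_const b a).prodMk (hasDerivAt_id b)
    exact ((hφd (a, b)).hasFDerivAt).comp_hasDerivAt b h1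
  set P : ℝ := Fx (x, t) with hPdef
  set Q : ℝ := Ft (x, t) with hQdef
  have hderiv1 : deriv (fun s' => φ x s') t = Q := (hDt x t).deriv
  have hderiv2 : deriv (fun y' => φ y' t) x = P := (hDx x t).deriv
  rw [hderiv1, hderiv2]
  -- Mean value theorem choices
  have mvtT : ∀ k, ∃ c ∈ Ioo (s k) (s k + Δt k),
      Ft (y k, c) = (φ (y k) (s k + Δt k) - φ (y k) (s k)) / Δt k := by
    intro k
    have hab : s k < s k + Δt k := by linarith [hΔtpos k]
    obtain ⟨c, hc, hc'⟩ := exists_hasDerivAt_eq_slope (fun b' => φ (y k) b')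
      (fun b' => Ft (y k, b')) hab
      (fun b' _ => ((hDt (y k) b').continuousAt).continuousWithinAt)
      (fun b' _ => hDt (y k) b')
    refine ⟨c, hc, ?_⟩
    rw [hc']
    congr 1
    ring
  have mvtXp : ∀ k, ∃ c ∈ Ioo (y k) (y k + Δx k),
      Fx (c, s k + Δt k) = (φ (y k + Δx k) (s k + Δt k) - φ (y k) (s k + Δt k)) / Δx k := by
    intro k
    have hab : y k < y k + Δx k := by linarith [hΔxpos k]
    obtain ⟨c, hc, hc'⟩ := exists_hasDerivAt_eq_slope (fun a' => φ a' (s k + Δt k))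
      (fun a' => Fx (a', s k + Δt k)) hab
      (fun a' _ => ((hDx a' (s k + Δt k)).continuousAt).continuousWithinAt)
      (fun a' _ => hDx a' (s k + Δt k))
    refine ⟨c, hc, ?_⟩
    rw [hc']
    congr 1
    ring
  have mvtXm : ∀ k, ∃ c ∈ Ioo (y k - Δx k) (y k),
      Fx (c, s k + Δt k) = (φ (y k) (s k + Δt k) - φ (y k - Δx k) (s k + Δt k)) / Δx k := by
    intro k
    have hab : y k - Δx k < y k := by linarith [hΔxpos k]
    obtain ⟨c, hc, hc'⟩ := exists_hasDerivAt_eq_slope (fun a' => φ a' (s k + Δt k))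
      (fun a' => Fx (a', s k + Δt k)) hab
      (fun a' _ => ((hDx a' (s k + Δt k)).continuousAt).continuousWithinAt)
      (fun a' _ => hDx a' (s k + Δt k))
    refine ⟨c, hc, ?_⟩
    rw [hc']
    congr 1
    ring
  choose σ hσ hσeq using mvtT
  choose ξp hξp hξpeq using mvtXp
  choose ξm hξm hξmeq using mvtXm
  -- limits of the intermediate points
  have hs' : Tendsto (fun k => s k + Δt k) atTop (nhds t) := by
    simpa using hs.add hΔt
  have hyp : Tendsto (fun k => y k + Δx k) atTop (nhds x) := by
    simpa using hy.add hΔx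
  have hym : Tendsto (fun k => y k - Δx k) atTop (nhds x) := by
    simpa using hy.sub hΔx
  have hσlim : Tendsto σ atTop (nhds t) :=
    tendsto_of_tendsto_of_tendsto_of_le_of_le hs hs'
      (fun k => (hσ k).1.le) (fun k => (hσ k).2.le)
  have hξplim : Tendsto ξp atTop (nhds x) :=
    tendsto_of_tendsto_of_tendsto_of_le_of_le hy hyp
      (fun k => (hξp k).1.le) (fun k => (hξp k).2.le)
  have hξmlim : Tendsto ξm atTop (nhds x) :=
    tendsto_of_tendsto_of_tendsto_of_le_of_le hym hy
      (fun k => (hξm k).1.le) (fun k => (hξm k).2.le)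
  set Dp : ℕ → ℝ := fun k => Fx (ξp k, s k + Δt k) with hDpdef
  set Dm : ℕ → ℝ := fun k => Fx (ξm k, s k + Δt k) with hDmdef
  have hDplim : Tendsto Dp atTop (nhds P) :=
    (hFx_cont.tendsto _).comp (hξplim.prodMk_nhds hs')
  have hDmlim : Tendsto Dm atTop (nhds P) :=
    (hFx_cont.tendsto _).comp (hξmlim.prodMk_nhds hs')
  have hTlim : Tendsto (fun k => Ft (y k, σ k)) atTop (nhds Q) :=
    (hFt_cont.tendsto _).comp (hy.prodMk_nhds hσlim)
  -- the limit functions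
  set h : ℝ → ℝ := fun a => f x a * P + g x a with hhdef
  set hk : ℕ → ℝ → ℝ := fun k A =>
      max (f (y k) A) 0 * Dp k + min (f (y k) A) 0 * Dm k + g (y k) A with hhkdef
  -- rewrite the scheme using hk
  have hrw : (fun k => (1 / Δt k) *
        (φ (y k) (s k) - φ (y k) (s k + Δt k)
          - Δt k * sInf ((fun A =>
              max (f (y k) A) 0 *
                ((φ (y k + Δx k) (s k + Δt k) - φ (y k) (s k + Δt k)) / Δx k)
              + min (f (y k) A) 0 *
                ((φ (y k) (s k + Δt k) - φ (y k - Δx k) (s k + Δt k)) / Δx k)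
              + g (y k) A) '' E)))
      = fun k => -(Ft (y k, σ k)) - sInf (hk k '' E) := by
    funext k
    have him : ((fun A =>
              max (f (y k) A) 0 *
                ((φ (y k + Δx k) (s k + Δt k) - φ (y k) (s k + Δt k)) / Δx k)
              + min (f (y k) A) 0 *
                ((φ (y k) (s k + Δt k) - φ (y k - Δx k) (s k + Δt k)) / Δx k)
              + g (y k) A) '' E) = hk k '' E := by
      apply image_congr
      intro A _
      rw [hhkdef]
      simp only [hDpdef, hDmdef, hξpeq k, hξmeq k]
    rw [him]
    have hΔtne : Δt k ≠ 0 := (hΔtpos k).ne'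
    have hT : φ (y k) (s k) - φ (y k) (s k + Δt k) = -(Δt k * Ft (y k, σ k)) := by
      have h2 := hσeq k
      rw [eq_div_iff hΔtne] at h2
      linarith
    rw [hT]
    field_simp
  rw [hrw]
  -- convergence of the sInf part
  have hSlim : Tendsto (fun k => sInf (hk k '' E)) atTop (nhds (sInf (h '' E))) := by
    have hcf : ∀ c : ℝ, ContinuousOn (fun A => f c A) E := fun c =>
      hf.comp (Continuous.continuousOn (continuous_const.prodMk continuous_id))
        (fun A hA => ⟨trivial, hA⟩)
    have hcg : ∀ c : ℝ, ContinuousOn (fun A => g c A) E := fun c =>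
      hg.comp (Continuous.continuousOn (continuous_const.prodMk continuous_id))
        (fun A hA => ⟨trivial, hA⟩)
    have hbk : ∀ k, BddBelow (hk k '' E) := by
      intro k
      refine (hEc.image_of_continuousOn ?_).bddBelow
      exact ((((hcf (y k)).sup continuousOn_const).mul continuousOn_const).add
        (((hcf (y k)).inf continuousOn_const).mul continuousOn_const)).add (hcg (y k))
    have hbh : BddBelow (h '' E) :=
      (hEc.image_of_continuousOn (((hcf x).mul continuousOn_const).add (hcg x))).bddBelow
    set K : Set (ℝ × ℝ) := (insert x (Set.range y)) ×ˢ E with hKdef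
    have hKc : IsCompact K := (hy.isCompact_insert_range).prod hEc
    have hKsub : K ⊆ Set.univ ×ˢ E := Set.prod_mono (Set.subset_univ _) le_rfl
    obtain ⟨M, hM⟩ := hKc.exists_bound_of_continuousOn (hf.mono hKsub)
    have hM0 : 0 ≤ M := by
      obtain ⟨a0, ha0⟩ := hE
      have := hM (x, a0) ⟨Set.mem_insert _ _, ha0⟩
      exact le_trans (norm_nonneg _) this
    have hufc := hKc.uniformContinuousOn_of_continuous (hf.mono hKsub)
    have hugc := hKc.uniformContinuousOn_of_continuous (hg.mono hKsub)
    rw [Metric.uniformContinuousOn_iff] at hufc hugc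
    rw [Metric.tendsto_nhds]
    intro ε hε
    obtain ⟨δ1, hδ1, hδ1'⟩ := hufc (ε / (8 * (|P| + 1))) (by positivity)
    obtain ⟨δ2, hδ2, hδ2'⟩ := hugc (ε / 8) (by positivity)
    have e1 : ∀ᶠ k in atTop, |Dp k - P| < ε / (8 * (M + 1)) := by
      have := Metric.tendsto_nhds.mp hDplim (ε / (8 * (M + 1))) (by positivity)
      simpa [Real.dist_eq] using this
    have e2 : ∀ᶠ k in atTop, |Dm k - P| < ε / (8 * (M + 1)) := by
      have := Metric.tendsto_nhds.mp hDmlim (ε / (8 * (M + 1))) (by positivity)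
      simpa [Real.dist_eq] using this
    have e3 : ∀ᶠ k in atTop, |y k - x| < min δ1 δ2 := by
      have := Metric.tendsto_nhds.mp hy (min δ1 δ2) (lt_min hδ1 hδ2)
      simpa [Real.dist_eq] using this
    filter_upwards [e1, e2, e3] with k h1 h1' h2
    rw [Real.dist_eq]
    have hdistA : ∀ A : ℝ, dist ((y k, A) : ℝ × ℝ) ((x, A) : ℝ × ℝ) = |y k - x| := by
      intro A
      simp [Prod.dist_eq, Real.dist_eq]
    have hmemy : ∀ A ∈ E, ((y k, A) : ℝ × ℝ) ∈ K := fun A hA =>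
      ⟨Set.mem_insert_of_mem _ (Set.mem_range_self k), hA⟩
    have hmemx : ∀ A ∈ E, ((x, A) : ℝ × ℝ) ∈ K := fun A hA => ⟨Set.mem_insert _ _, hA⟩
    have key : ∀ A ∈ E, |hk k A - h A| ≤ ε / 2 := by
      intro A hA
      have hfd : |f (y k) A - f x A| < ε / (8 * (|P| + 1)) := by
        have := hδ1' (y k, A) (hmemy A hA) (x, A) (hmemx A hA)
          (by rw [hdistA]; exact lt_of_lt_of_le h2 (min_le_left _ _))
        simpa [Real.dist_eq] using this
      have hgd : |g (y k) A - g x A| < ε / 8 := by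
        have := hδ2' (y k, A) (hmemy A hA) (x, A) (hmemx A hA)
          (by rw [hdistA]; exact lt_of_lt_of_le h2 (min_le_right _ _))
        simpa [Real.dist_eq] using this
      have hMA : |f (y k) A| ≤ M := by
        have := hM (y k, A) (hmemy A hA)
        simpa [Real.norm_eq_abs] using this
      have hsplit : max (f (y k) A) 0 + min (f (y k) A) 0 = f (y k) A := by
        have := max_add_min (f (y k) A) 0
        linarith
      have e : hk k A - h A = max (f (y k) A) 0 * (Dp k - P)
          + min (f (y k) A) 0 * (Dm k - P)
          + (f (y k) A - f x A) * P + (g (y k) A - g x A) := by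
        simp only [hhkdef, hhdef]
        linear_combination P * hsplit
      have tri : |hk k A - h A| ≤ |max (f (y k) A) 0 * (Dp k - P)|
          + |min (f (y k) A) 0 * (Dm k - P)|
          + |(f (y k) A - f x A) * P| + |(g (y k) A - g x A)| := by
        rw [e]
        exact (abs_add_le _ _).trans (add_le_add ((abs_add_le _ _).trans
          (add_le_add (abs_add_le _ _) le_rfl)) le_rfl)
      have b1 : |max (f (y k) A) 0 * (Dp k - P)| ≤ M * (ε / (8 * (M + 1))) := by
        rw [abs_mul]
        exact mul_le_mul (le_trans (abs_posPart_le' _) hMA) h1.le (abs_nonneg _) hM0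
      have b2 : |min (f (y k) A) 0 * (Dm k - P)| ≤ M * (ε / (8 * (M + 1))) := by
        rw [abs_mul]
        exact mul_le_mul (le_trans (abs_negPart_le' _) hMA) h1'.le (abs_nonneg _) hM0
      have b3 : |(f (y k) A - f x A) * P| ≤ (ε / (8 * (|P| + 1))) * |P| := by
        rw [abs_mul]
        exact mul_le_mul_of_nonneg_right hfd.le (abs_nonneg _)
      have c1 : M * (ε / (8 * (M + 1))) ≤ ε / 8 := by
        rw [mul_comm, div_mul_eq_mul_div, div_le_div_iff₀ (by positivity) (by norm_num)]
        nlinarith [hε.le, hM0, mul_nonneg hε.le hM0]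
      have c2 : (ε / (8 * (|P| + 1))) * |P| ≤ ε / 8 := by
        rw [div_mul_eq_mul_div, div_le_div_iff₀ (by positivity) (by norm_num)]
        nlinarith [hε.le, abs_nonneg P, mul_nonneg hε.le (abs_nonneg P)]
      linarith [tri, b1, b2, b3, c1, c2, hgd.le]
    have := abs_csInf_image_sub_le hE (hbk k) hbh key
    linarith [this, hε]
  have := (hTlim.neg).sub hSlim
  exact this
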